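/- The tropical curve defined by a tropical polynomial (the non-differentiability locus of T) is a closed subset of ℝ² with empty interior, provided the monomials of T are pairwise distinct affine functions. -/

import Mathlib

open Set Filter Topology

/-- The affine monomial function. -/
private def tcL (c : ℤ × ℤ → ℝ) (ij : ℤ × ℤ) : ℝ × ℝ → ℝ :=
  fun p => (ij.1 : ℝ) * p.1 + (ij.2 : ℝ) * p.2 + c ij

/-- Its derivative as a continuous linear map. -/
private noncomputable def tcD (ij : ℤ × ℤ) : (ℝ × ℝ) →L[ℝ] ℝ :=
  (ij.1 : ℝ) • (ContinuousLinearMap.fst ℝ ℝ ℝ) + (ij.2 : ℝ) • (ContinuousLinearMap.snd ℝ ℝ ℝ)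

private lemma tcD_apply (ij : ℤ × ℤ) (p : ℝ × ℝ) :
    tcD ij p = (ij.1 : ℝ) * p.1 + (ij.2 : ℝ) * p.2 := by
  simp [tcD, smul_eq_mul]

private lemma tcL_hasFDerivAt (c : ℤ × ℤ → ℝ) (ij : ℤ × ℤ) (p : ℝ × ℝ) :
    HasFDerivAt (tcL c ij) (tcD ij) p := by
  have h : HasFDerivAt (fun q : ℝ × ℝ => tcD ij q + c ij) (tcD ij) p :=
    ((tcD ij).hasFDerivAt).add_const (c ij)
  rw [show tcL c ij = (fun q : ℝ × ℝ => tcD ij q + c ij) from funext fun q => by simp [tcL, tcD_apply]]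
  exact h

private lemma tcL_continuous (c : ℤ × ℤ → ℝ) (ij : ℤ × ℤ) : Continuous (tcL c ij) := by
  have : Differentiable ℝ (tcL c ij) := fun p => (tcL_hasFDerivAt c ij p).differentiableAt
  exact this.continuous

private lemma tcD_injective {ij kl : ℤ × ℤ} (h : tcD ij = tcD kl) : ij = kl := by
  have h1 := congrArg (fun D : (ℝ × ℝ) →L[ℝ] ℝ => D (1, 0)) h
  have h2 := congrArg (fun D : (ℝ × ℝ) →L[ℝ] ℝ => D (0, 1)) h
  simp [tcD_apply] at h1 h2
  exact Prod.ext (by exact_mod_cast h1) (by exact_mod_cast h2)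

/-- If two distinct monomials both attain the max at `p`, then `T` is not differentiable at `p`. -/
private lemma tc_not_diff {Δ : Finset (ℤ × ℤ)} {c : ℤ × ℤ → ℝ} {T : ℝ × ℝ → ℝ}
    (hle : ∀ ij ∈ Δ, ∀ x, tcL c ij x ≤ T x)
    {ij kl : ℤ × ℤ} (hij : ij ∈ Δ) (hkl : kl ∈ Δ) (hne : ij ≠ kl) {p : ℝ × ℝ}
    (h1 : tcL c ij p = T p) (h2 : tcL c kl p = T p) : ¬ DifferentiableAt ℝ T p := by
  intro hd
  have key : ∀ mn ∈ Δ, tcL c mn p = T p → fderiv ℝ T p = tcD mn := by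
    intro mn hmn hval
    have hmin : IsLocalMin (fun x => T x - tcL c mn x) p := by
      apply Filter.Eventually.of_forall
      intro x
      have := hle mn hmn x
      simp only [hval]
      linarith
    have hdg : HasFDerivAt (fun x => T x - tcL c mn x) (fderiv ℝ T p - tcD mn) p :=
      hd.hasFDerivAt.sub (tcL_hasFDerivAt c mn p)
    have h0 : fderiv ℝ (fun x => T x - tcL c mn x) p = 0 := hmin.fderiv_eq_zero
    rw [hdg.fderiv] at h0
    have := sub_eq_zero.mp h0
    exact this
  have e1 := key ij hij h1
  have e2 := key kl hkl h2
  exact hne (tcD_injective (e1 ▸ e2))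

/-- The coincidence set of two distinct monomials has empty interior. -/
private lemma tcZ_interior_empty (c : ℤ × ℤ → ℝ) {ij kl : ℤ × ℤ} (hne : ij ≠ kl) :
    interior {p : ℝ × ℝ | tcL c ij p = tcL c kl p} = ∅ := by
  by_contra h
  obtain ⟨p, hp⟩ := Set.nonempty_iff_ne_empty.mpr h
  obtain ⟨ε, hε, hball⟩ := Metric.mem_nhds_iff.mp (mem_interior_iff_mem_nhds.mp hp)
  have hp0 : p ∈ {p : ℝ × ℝ | tcL c ij p = tcL c kl p} := interior_subset hp
  rw [Set.mem_setOf_eq] at hp0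
  by_cases hc1 : ij.1 = kl.1
  · have hc2 : ij.2 ≠ kl.2 := fun h2 => hne (Prod.ext hc1 h2)
    have hq : (p.1, p.2 + ε/2) ∈ Metric.ball p ε := by
      simp only [Metric.mem_ball, Prod.dist_eq, Real.dist_eq]
      have : |p.1 - p.1| = 0 := by simp
      have h2 : |p.2 + ε/2 - p.2| = ε/2 := by rw [show p.2 + ε/2 - p.2 = ε/2 by ring]; exact abs_of_pos (by linarith)
      rw [this, h2]
      simp only [max_lt_iff]
      constructor <;> linarith
    have hqz : tcL c ij (p.1, p.2 + ε/2) = tcL c kl (p.1, p.2 + ε/2) := hball hq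
    simp only [tcL] at hqz hp0
    have heq : (ij.2 : ℝ) * (ε/2) = (kl.2 : ℝ) * (ε/2) := by nlinarith [hqz, hp0]
    have : (ij.2 : ℝ) = kl.2 := mul_right_cancel₀ (by positivity) heq
    exact hc2 (by exact_mod_cast this)
  · have hq : (p.1 + ε/2, p.2) ∈ Metric.ball p ε := by
      simp only [Metric.mem_ball, Prod.dist_eq, Real.dist_eq]
      have : |p.2 - p.2| = 0 := by simp
      have h2 : |p.1 + ε/2 - p.1| = ε/2 := by rw [show p.1 + ε/2 - p.1 = ε/2 by ring]; exact abs_of_pos (by linarith)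
      rw [this, h2]
      simp only [max_lt_iff]
      constructor <;> linarith
    have hqz : tcL c ij (p.1 + ε/2, p.2) = tcL c kl (p.1 + ε/2, p.2) := hball hq
    simp only [tcL] at hqz hp0
    have heq : (ij.1 : ℝ) * (ε/2) = (kl.1 : ℝ) * (ε/2) := by nlinarith [hqz, hp0]
    have : (ij.1 : ℝ) = kl.1 := mul_right_cancel₀ (by positivity) heq
    exact hc1 (by exact_mod_cast this)

/-- The tropical curve (non-differentiability locus) of a tropical polynomial whose
monomials are pairwise distinct affine functions is a closed subset of `ℝ²` with
empty interior. -/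
theorem tropical_curve_closed_empty_interior (Δ : Finset (ℤ × ℤ)) (hΔ : Δ.Nonempty)
    (c : ℤ × ℤ → ℝ) (T : ℝ × ℝ → ℝ)
    (hT : ∀ p : ℝ × ℝ, T p = Δ.sup' hΔ (fun ij => (ij.1 : ℝ) * p.1 + (ij.2 : ℝ) * p.2 + c ij))
    (hdist : ∀ ij ∈ Δ, ∀ kl ∈ Δ, ij ≠ kl →
      (fun p : ℝ × ℝ => (ij.1 : ℝ) * p.1 + (ij.2 : ℝ) * p.2 + c ij) ≠
      (fun p : ℝ × ℝ => (kl.1 : ℝ) * p.1 + (kl.2 : ℝ) * p.2 + c kl)) :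
    IsClosed {p : ℝ × ℝ | ¬ DifferentiableAt ℝ T p} ∧
    interior {p : ℝ × ℝ | ¬ DifferentiableAt ℝ T p} = ∅ := by
  have hT' : ∀ p : ℝ × ℝ, T p = Δ.sup' hΔ (fun ij => tcL c ij p) := hT
  have hle : ∀ ij ∈ Δ, ∀ x, tcL c ij x ≤ T x := by
    intro ij hij x
    rw [hT' x]
    exact Finset.le_sup' (fun kl => tcL c kl x) hij
  -- the set where a unique monomial strictly dominates
  set U : Set (ℝ × ℝ) :=
    {p | ∃ ij ∈ Δ, ∀ kl ∈ Δ, kl ≠ ij → tcL c kl p < tcL c ij p} with hU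
  -- U is open
  have hUopen : IsOpen U := by
    rw [isOpen_iff_mem_nhds]
    rintro p ⟨ij, hij, hstrict⟩
    have hVopen : IsOpen (⋂ kl ∈ Δ.erase ij, {q : ℝ × ℝ | tcL c kl q < tcL c ij q}) :=
      isOpen_biInter_finset fun kl _ =>
        isOpen_lt (tcL_continuous c kl) (tcL_continuous c ij)
    have hpV : p ∈ ⋂ kl ∈ Δ.erase ij, {q : ℝ × ℝ | tcL c kl q < tcL c ij q} := by
      simp only [Set.mem_iInter, Finset.mem_erase]
      rintro kl ⟨hklne, hklΔ⟩
      exact hstrict kl hklΔ hklne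
    refine Filter.mem_of_superset (hVopen.mem_nhds hpV) ?_
    intro q hq
    refine ⟨ij, hij, fun kl hkl hklne => ?_⟩
    have := Set.mem_iInter.mp hq kl
    simp only [Set.mem_iInter, Finset.mem_erase, Set.mem_setOf_eq] at this
    exact this ⟨hklne, hkl⟩
  -- on U, T is differentiable
  have hdiffU : ∀ p ∈ U, DifferentiableAt ℝ T p := by
    rintro p ⟨ij, hij, hstrict⟩
    have hVopen : IsOpen (⋂ kl ∈ Δ.erase ij, {q : ℝ × ℝ | tcL c kl q < tcL c ij q}) :=
      isOpen_biInter_finset fun kl _ =>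
        isOpen_lt (tcL_continuous c kl) (tcL_continuous c ij)
    have hpV : p ∈ ⋂ kl ∈ Δ.erase ij, {q : ℝ × ℝ | tcL c kl q < tcL c ij q} := by
      simp only [Set.mem_iInter, Finset.mem_erase]
      rintro kl ⟨hklne, hklΔ⟩
      exact hstrict kl hklΔ hklne
    have hev : T =ᶠ[nhds p] tcL c ij := by
      refine Filter.eventuallyEq_of_mem (hVopen.mem_nhds hpV) fun q hq => ?_
      refine le_antisymm ?_ (hle ij hij q)
      rw [hT' q]
      refine Finset.sup'_le hΔ _ fun kl hkl => ?_
      by_cases hklij : kl = ij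
      · rw [hklij]
      · have := Set.mem_iInter.mp hq kl
        simp only [Set.mem_iInter, Finset.mem_erase, Set.mem_setOf_eq] at this
        exact (this ⟨hklij, hkl⟩).le
    exact ((tcL_hasFDerivAt c ij p).differentiableAt).congr_of_eventuallyEq hev
  -- off U, two distinct monomials attain the max
  have hattain : ∀ p ∉ U, ∃ ij ∈ Δ, ∃ kl ∈ Δ, ij ≠ kl ∧
      tcL c ij p = T p ∧ tcL c kl p = T p := by
    intro p hp
    obtain ⟨ij, hij, hmax⟩ := Finset.exists_mem_eq_sup' hΔ (fun kl => tcL c kl p)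
    have hijval : tcL c ij p = T p := by rw [hT' p, hmax]
    simp only [hU, Set.mem_setOf_eq, not_exists, not_and] at hp
    have := hp ij hij
    push_neg at this
    obtain ⟨kl, hkl, hklne, hge⟩ := this
    refine ⟨ij, hij, kl, hkl, fun h => hklne h.symm, hijval, ?_⟩
    exact le_antisymm (hle kl hkl p) (hijval ▸ hge)
  have hnotdiffUc : ∀ p ∉ U, ¬ DifferentiableAt ℝ T p := by
    intro p hp
    obtain ⟨ij, hij, kl, hkl, hne, h1, h2⟩ := hattain p hp
    exact tc_not_diff hle hij hkl hne h1 h2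
  have hSU : {p : ℝ × ℝ | ¬ DifferentiableAt ℝ T p} = Uᶜ := by
    ext p
    simp only [Set.mem_setOf_eq, Set.mem_compl_iff]
    constructor
    · intro hnd hpU; exact hnd (hdiffU p hpU)
    · exact hnotdiffUc p
  constructor
  · rw [hSU]; exact hUopen.isClosed_compl
  · -- empty interior via meagreness
    have hmeagre : IsMeagre {p : ℝ × ℝ | ¬ DifferentiableAt ℝ T p} := by
      rw [isMeagre_iff_countable_union_isNowhereDense]
      refine ⟨(fun q : (ℤ × ℤ) × (ℤ × ℤ) => {p : ℝ × ℝ | tcL c q.1 p = tcL c q.2 p}) ''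
        {q | q.1 ≠ q.2}, ?_, ?_, ?_⟩
      · rintro t ⟨q, hq, rfl⟩
        have hclosed : IsClosed {p : ℝ × ℝ | tcL c q.1 p = tcL c q.2 p} :=
          isClosed_eq (tcL_continuous c q.1) (tcL_continuous c q.2)
        rw [hclosed.isNowhereDense_iff]
        exact tcZ_interior_empty c hq
      · exact (Set.to_countable _).image _
      · intro p hp
        have hpU : p ∉ U := fun hpU => hp (hdiffU p hpU)
        obtain ⟨ij, hij, kl, hkl, hne, h1, h2⟩ := hattain p hpU
        refine Set.mem_sUnion.mpr ⟨_, ⟨(ij, kl), hne, rfl⟩, ?_⟩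
        simp only [Set.mem_setOf_eq]
        rw [h1, h2]
    rw [interior_eq_empty_iff_dense_compl]
    exact dense_of_mem_residual hmeagre
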